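/- Let S ⊂ [-1,1]^n be countably 1-rectifiable and Borel measurable, a = ∞, and b : ℝ^n → [0,∞] lower semi-continuous on S with b = ∞ outside S. Define L(γ) = ∫_{γ^{-1}(S)} b(γ)|γ'| dt (with L(γ) = ∞ if γ positively traverses the complement of S). If γ_j is a sequence of Lipschitz paths with L(γ_j) uniformly bounded, then for each δ > 0 there exists λ ∈ [0,∞) such that H^1(γ_j([0,1]) \ S_λ) ≤ δ for all j, where S_λ = {z ∈ S : b(z) ≤ λ}. -/

import Mathlib

open MeasureTheory Set Filter Topology
open scoped ENNReal NNReal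

noncomputable section

/-- Euclidean space `ℝ^n`. -/
abbrev Euc (n : ℕ) : Type := EuclideanSpace ℝ (Fin n)

/-- The hypercube `[-1,1]^n`. -/
def cube (n : ℕ) : Set (Euc n) := {x | ∀ i, |x i| ≤ 1}

/-- A set is countably `1`-rectifiable if it is a countable union of Lipschitz images of
bounded subsets of `ℝ`. -/
def Countably1Rectifiable {n : ℕ} (S : Set (Euc n)) : Prop :=
  ∃ (f : ℕ → ℝ → Euc n) (A : ℕ → Set ℝ),
    (∀ i, ∃ K : ℝ≥0, LipschitzOnWith K (f i) (A i)) ∧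
    (∀ i, Bornology.IsBounded (A i)) ∧ S = ⋃ i, (f i) '' (A i)

/-- The cost of travelling along a Lipschitz path, for the friction coefficient `bext`
(already extended by the off-network cost outside the network). -/
def pathCost {n : ℕ} (bext : Euc n → ℝ≥0∞) (γ : ℝ → Euc n) : ℝ≥0∞ :=
  ∫⁻ t in Icc (0:ℝ) 1, bext (γ t) * ENNReal.ofReal ‖deriv γ t‖

/-- If `γ` is differentiable on a measurable set `s` with `‖deriv γ‖ < c` there, then
`H^1(γ '' s) ≤ c · |s|`. -/
lemma hmeas_image_le_of_deriv_lt {n : ℕ} {γ : ℝ → Euc n} (hγ : Continuous γ)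
    {s : Set ℝ} (hs : MeasurableSet s) {c : ℝ} (hc : 0 < c)
    (hd : ∀ t ∈ s, DifferentiableAt ℝ γ t ∧ ‖deriv γ t‖ < c) :
    μH[1] (γ '' s) ≤ ENNReal.ofReal c * volume s := by
  -- the good sets
  set C : ℕ → Set ℝ := fun m =>
    s ∩ {t | ∀ u : ℝ, |u - t| < 1 / (m + 1) → ‖γ u - γ t‖ ≤ c * |u - t|} with hC
  have hCmeas : ∀ m, MeasurableSet (C m) := by
    intro m
    apply hs.inter
    have : {t : ℝ | ∀ u : ℝ, |u - t| < 1 / (m + 1) → ‖γ u - γ t‖ ≤ c * |u - t|}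
        = ⋂ q : ℚ, {t : ℝ | |(q : ℝ) - t| < 1 / (m + 1) → ‖γ (q : ℝ) - γ t‖ ≤ c * |(q : ℝ) - t|} := by
      ext t
      simp only [mem_iInter, mem_setOf_eq]
      constructor
      · intro h q hq; exact h _ hq
      · intro h u hu
        -- density of rationals
        have hball : u ∈ Metric.ball t (1 / (m + 1)) := by
          simpa [Metric.mem_ball, Real.dist_eq] using hu
        have hcl : u ∈ closure (Metric.ball t (1 / (m + 1)) ∩ Set.range ((↑) : ℚ → ℝ)) :=
          Rat.denseRange_cast.open_subset_closure_inter Metric.isOpen_ball hball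
        have hclosed : IsClosed {x : ℝ | ‖γ x - γ t‖ ≤ c * |x - t|} := by
          apply isClosed_le
          · exact ((hγ.sub continuous_const).norm)
          · exact (continuous_const.mul (continuous_id.sub continuous_const).abs)
        have hsub : Metric.ball t (1 / (m + 1)) ∩ Set.range ((↑) : ℚ → ℝ)
            ⊆ {x : ℝ | ‖γ x - γ t‖ ≤ c * |x - t|} := by
          rintro x ⟨hx1, q, rfl⟩
          exact h q (by simpa [Metric.mem_ball, Real.dist_eq] using hx1)
        exact hclosed.closure_subset ((closure_mono hsub) hcl)
    rw [this]
    refine MeasurableSet.iInter fun q => ?_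
    have : {t : ℝ | |(q : ℝ) - t| < 1 / (m + 1) → ‖γ (q : ℝ) - γ t‖ ≤ c * |(q : ℝ) - t|}
        = {t : ℝ | |(q : ℝ) - t| < 1 / (m + 1)}ᶜ ∪ {t : ℝ | ‖γ (q : ℝ) - γ t‖ ≤ c * |(q : ℝ) - t|} := by
      ext t; simp [imp_iff_not_or]
    rw [this]
    refine MeasurableSet.union ?_ ?_
    · exact (measurableSet_lt (continuous_const.sub continuous_id).abs.measurable measurable_const).compl
    · exact measurableSet_le (continuous_const.sub hγ).norm.measurable
        (continuous_const.mul (continuous_const.sub continuous_id).abs).measurable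
  -- covering
  have hcover : s ⊆ ⋃ m, C m := by
    intro t ht
    obtain ⟨hdiff, hlt⟩ := hd t ht
    have h1 : HasDerivAt γ (deriv γ t) t := hdiff.hasDerivAt
    rw [hasDerivAt_iff_isLittleO] at h1
    have hε : (0 : ℝ) < c - ‖deriv γ t‖ := by linarith
    have h2 := h1.def hε
    rw [Metric.eventually_nhds_iff] at h2
    obtain ⟨δ, hδ, hδ2⟩ := h2
    obtain ⟨m, hm⟩ := exists_nat_one_div_lt hδ
    refine mem_iUnion.2 ⟨m, ht, fun u hu => ?_⟩
    have hdist : dist u t < δ := by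
      rw [Real.dist_eq]; exact lt_trans hu (by exact_mod_cast hm)
    have h3 := hδ2 hdist
    have h4 : ‖γ u - γ t‖ ≤ ‖γ u - γ t - (u - t) • deriv γ t‖ + ‖(u - t) • deriv γ t‖ := by
      simpa using norm_add_le (γ u - γ t - (u - t) • deriv γ t) ((u - t) • deriv γ t)
    have h5 : ‖(u - t) • deriv γ t‖ = |u - t| * ‖deriv γ t‖ := by
      rw [norm_smul, Real.norm_eq_abs]
    have h6 : ‖u - t‖ = |u - t| := Real.norm_eq_abs _
    calc ‖γ u - γ t‖ ≤ (c - ‖deriv γ t‖) * |u - t| + |u - t| * ‖deriv γ t‖ := by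
          rw [h6] at h3; linarith [h4, h3, h5.le, h5.ge]
      _ = c * |u - t| := by ring
  -- disjointify
  set D : ℕ → Set ℝ := disjointed C with hD
  have hDmeas : ∀ m, MeasurableSet (D m) := MeasurableSet.disjointed hCmeas
  have hDdisj : Pairwise (Function.onFun Disjoint D) := disjoint_disjointed C
  have hDunion : ⋃ m, D m = s := by
    rw [hD, iUnion_disjointed]
    exact subset_antisymm (iUnion_subset fun m => inter_subset_left) hcover
  -- pieces
  set P : ℕ → ℤ → Set ℝ := fun m j =>
    D m ∩ (fun t : ℝ => t * (m + 1)) ⁻¹' Ico (j : ℝ) (j + 1) with hP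
  have hPmeas : ∀ m j, MeasurableSet (P m j) :=
    fun m j => (hDmeas m).inter
      ((continuous_id.mul continuous_const).measurable measurableSet_Ico)
  have hPunion : ∀ m, ⋃ j : ℤ, P m j = D m := by
    intro m
    apply subset_antisymm (iUnion_subset fun j => inter_subset_left)
    intro t ht
    refine mem_iUnion.2 ⟨⌊t * (m + 1)⌋, ht, ?_⟩
    exact ⟨Int.floor_le _, Int.lt_floor_add_one _⟩
  have hPdisj : ∀ m, Pairwise (Function.onFun Disjoint (P m)) := by
    intro m j j' hjj'
    refine Set.disjoint_left.2 fun t ht ht' => hjj' ?_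
    have h1 := ht.2; have h2 := ht'.2
    simp only [mem_preimage, mem_Ico] at h1 h2
    have b1 : j < j' + 1 := by exact_mod_cast lt_of_le_of_lt h1.1 h2.2
    have b2 : j' < j + 1 := by exact_mod_cast lt_of_le_of_lt h2.1 h1.2
    omega
  -- Lipschitz on each piece
  have hPlip : ∀ m j, LipschitzOnWith c.toNNReal γ (P m j) := by
    intro m j
    apply LipschitzOnWith.of_dist_le_mul
    intro x hx y hy
    have hxC : x ∈ C m := disjointed_subset C m hx.1
    have hxy : |y - x| < 1 / (m + 1) := by
      have h1 := hx.2; have h2 := hy.2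
      simp only [mem_preimage, mem_Ico] at h1 h2
      have hm1 : (0 : ℝ) < (m : ℝ) + 1 := by positivity
      rw [abs_sub_lt_iff]
      constructor <;> (rw [lt_div_iff₀ hm1]; nlinarith [h1.1, h1.2, h2.1, h2.2])
    have := hxC.2 y hxy
    rw [dist_eq_norm, dist_comm, Real.dist_eq]
    calc ‖γ x - γ y‖ = ‖γ y - γ x‖ := by rw [norm_sub_rev]
      _ ≤ c * |y - x| := this
      _ = c.toNNReal * |y - x| := by rw [Real.coe_toNNReal c hc.le]
  -- put everything together
  calc μH[1] (γ '' s)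
      = μH[1] (γ '' ⋃ m, ⋃ j, P m j) := by rw [show (⋃ m, ⋃ j, P m j) = s by
          simp_rw [hPunion]; exact hDunion]
    _ = μH[1] (⋃ m, ⋃ j, γ '' P m j) := by rw [image_iUnion]; simp_rw [image_iUnion]
    _ ≤ ∑' m, μH[1] (⋃ j, γ '' P m j) := measure_iUnion_le _
    _ ≤ ∑' m, ∑' j : ℤ, μH[1] (γ '' P m j) := ENNReal.tsum_le_tsum fun m => measure_iUnion_le _
    _ ≤ ∑' m, ∑' j : ℤ, ENNReal.ofReal c * volume (P m j) := by
        refine ENNReal.tsum_le_tsum fun m => ENNReal.tsum_le_tsum fun j => ?_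
        have h1 := (hPlip m j).hausdorffMeasure_image_le (zero_le_one' ℝ)
        rw [ENNReal.rpow_one] at h1
        calc μH[1] (γ '' P m j) ≤ (c.toNNReal : ℝ≥0∞) * μH[1] (P m j) := h1
          _ = ENNReal.ofReal c * volume (P m j) := by
              rw [MeasureTheory.hausdorffMeasure_real]; rfl
    _ = ENNReal.ofReal c * volume s := by
        rw [← hDunion, measure_iUnion hDdisj hDmeas]
        rw [← ENNReal.tsum_mul_left]
        congr 1
        ext m
        rw [← hPunion m, measure_iUnion (hPdisj m) (hPmeas m), ← ENNReal.tsum_mul_left]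


lemma hmeas_image_le_lintegral {n : ℕ} {γ : ℝ → Euc n} {Kc : ℝ≥0}
    (hlip : LipschitzWith Kc γ) {E : Set ℝ} (hE : MeasurableSet E)
    (hE1 : E ⊆ Icc (0:ℝ) 1) :
    μH[1] (γ '' E) ≤ ∫⁻ t in E, ENNReal.ofReal ‖deriv γ t‖ := by
  set D : Set ℝ := {t | DifferentiableAt ℝ γ t} with hDdef
  have hDmeas : MeasurableSet D := measurableSet_of_differentiableAt ℝ γ
  have hnull : volume (E \ D) = 0 := by
    have h := hlip.ae_differentiableAt (μ := (volume : Measure ℝ))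
    exact measure_mono_null (fun t ht => ht.2) (ae_iff.1 h)
  have himg0 : μH[1] (γ '' (E \ D)) = 0 := by
    have h1 := hlip.hausdorffMeasure_image_le (zero_le_one' ℝ) (E \ D)
    rw [MeasureTheory.hausdorffMeasure_real, hnull, mul_zero] at h1
    exact le_antisymm h1 zero_le
  have hsplit : μH[1] (γ '' E) ≤ μH[1] (γ '' (E ∩ D)) := by
    calc μH[1] (γ '' E) = μH[1] (γ '' ((E ∩ D) ∪ (E \ D))) := by
          rw [inter_union_diff]
      _ = μH[1] (γ '' (E ∩ D) ∪ γ '' (E \ D)) := by rw [image_union]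
      _ ≤ μH[1] (γ '' (E ∩ D)) + μH[1] (γ '' (E \ D)) := measure_union_le _ _
      _ = μH[1] (γ '' (E ∩ D)) := by rw [himg0, add_zero]
  refine hsplit.trans (ENNReal.le_of_forall_pos_le_add fun ε hε hI => ?_)
  set εr : ℝ := (ε : ℝ) with hεrdef
  have hεr : 0 < εr := hε
  set A : ℕ → Set ℝ := fun k =>
    (E ∩ D) ∩ (fun t => ‖deriv γ t‖) ⁻¹' Ico ((k : ℝ) * εr) ((k + 1) * εr) with hA
  have hAmeas : ∀ k, MeasurableSet (A k) := fun k =>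
    (hE.inter hDmeas).inter ((measurable_deriv γ).norm measurableSet_Ico)
  have hAdisj : Pairwise (Function.onFun Disjoint A) := by
    intro k k' hkk'
    refine Set.disjoint_left.2 fun t ht ht' => hkk' ?_
    have h1 := ht.2; have h2 := ht'.2
    simp only [mem_preimage, mem_Ico] at h1 h2
    have b1 : (k : ℝ) * εr < ((k' : ℝ) + 1) * εr := lt_of_le_of_lt h1.1 h2.2
    have b2 : (k' : ℝ) * εr < ((k : ℝ) + 1) * εr := lt_of_le_of_lt h2.1 h1.2
    have c1 : (k : ℝ) < (k' : ℝ) + 1 := by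
      have := lt_of_mul_lt_mul_right b1 hεr.le; linarith
    have c2 : (k' : ℝ) < (k : ℝ) + 1 := by
      have := lt_of_mul_lt_mul_right b2 hεr.le; linarith
    have d1 : k < k' + 1 := by exact_mod_cast c1
    have d2 : k' < k + 1 := by exact_mod_cast c2
    omega
  have hAcover : E ∩ D = ⋃ k, A k := by
    apply subset_antisymm
    · intro t ht
      set x := ‖deriv γ t‖ with hx
      have hx0 : 0 ≤ x / εr := by positivity
      refine mem_iUnion.2 ⟨⌊x / εr⌋₊, ht, ?_, ?_⟩
      · have := Nat.floor_le hx0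
        calc (⌊x / εr⌋₊ : ℝ) * εr ≤ x / εr * εr := by nlinarith
          _ = x := div_mul_cancel₀ x hεr.ne'
      · have := Nat.lt_floor_add_one (x / εr)
        calc x = x / εr * εr := (div_mul_cancel₀ x hεr.ne').symm
          _ < ((⌊x / εr⌋₊ : ℝ) + 1) * εr := by nlinarith
    · exact iUnion_subset fun k => inter_subset_left
  calc μH[1] (γ '' (E ∩ D)) = μH[1] (γ '' ⋃ k, A k) := by rw [hAcover]
    _ = μH[1] (⋃ k, γ '' A k) := by rw [image_iUnion]
    _ ≤ ∑' k, μH[1] (γ '' A k) := measure_iUnion_le _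
    _ ≤ ∑' k, ((∫⁻ t in A k, ENNReal.ofReal ‖deriv γ t‖) + ENNReal.ofReal εr * volume (A k)) := by
        refine ENNReal.tsum_le_tsum fun k => ?_
        have hc : (0 : ℝ) < ((k : ℝ) + 1) * εr := by positivity
        have h1 : μH[1] (γ '' A k) ≤ ENNReal.ofReal (((k : ℝ) + 1) * εr) * volume (A k) := by
          refine hmeas_image_le_of_deriv_lt hlip.continuous (hAmeas k) hc fun t ht => ?_
          exact ⟨ht.1.2, ht.2.2⟩
        have h2 : ENNReal.ofReal (((k : ℝ) + 1) * εr) * volume (A k)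
            = ENNReal.ofReal ((k : ℝ) * εr) * volume (A k) + ENNReal.ofReal εr * volume (A k) := by
          rw [← add_mul, ← ENNReal.ofReal_add (by positivity) hεr.le]
          ring_nf
        have h3 : ENNReal.ofReal ((k : ℝ) * εr) * volume (A k)
            ≤ ∫⁻ t in A k, ENNReal.ofReal ‖deriv γ t‖ := by
          rw [← setLIntegral_const (A k) (ENNReal.ofReal ((k : ℝ) * εr))]
          refine setLIntegral_mono ((measurable_deriv γ).norm.ennreal_ofReal) fun t ht => ?_
          exact ENNReal.ofReal_le_ofReal ht.2.1
        calc μH[1] (γ '' A k) ≤ _ := h1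
          _ = _ := h2
          _ ≤ _ := add_le_add_left h3 _
    _ = (∫⁻ t in ⋃ k, A k, ENNReal.ofReal ‖deriv γ t‖) + ENNReal.ofReal εr * volume (⋃ k, A k) := by
        rw [ENNReal.tsum_add, lintegral_iUnion hAmeas hAdisj,
          measure_iUnion hAdisj hAmeas, ENNReal.tsum_mul_left]
    _ ≤ (∫⁻ t in E, ENNReal.ofReal ‖deriv γ t‖) + (ε : ℝ≥0∞) := by
        gcongr
        · rw [← hAcover]; exact inter_subset_left
        · rw [← hAcover]
          calc ENNReal.ofReal εr * volume (E ∩ D)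
              ≤ ENNReal.ofReal εr * volume (Icc (0:ℝ) 1) :=
                mul_le_mul_right (measure_mono (inter_subset_left.trans hE1)) _
            _ = (ε : ℝ≥0∞) := by
                rw [Real.volume_Icc, show (1:ℝ) - 0 = 1 by ring, ENNReal.ofReal_one, mul_one,
                  hεrdef, ENNReal.ofReal_coe_nnreal]


lemma measurableSet_sublevel {n : ℕ} {S : Set (Euc n)} (hSmeas : MeasurableSet S)
    {b : Euc n → ℝ≥0∞} (hlsc : LowerSemicontinuousOn b S) (lam : ℝ≥0∞) :
    MeasurableSet {z ∈ S | b z ≤ lam} := by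
  set U : Set (Euc n) := {z ∈ S | lam < b z} with hU
  have key : ∀ x ∈ U, ∃ V : Set (Euc n), IsOpen V ∧ x ∈ V ∧ V ∩ S ⊆ {z | lam < b z} := by
    intro x hx
    have h1 : ∀ᶠ z in 𝓝[S] x, lam < b z := hlsc x hx.1 lam hx.2
    obtain ⟨V, hVo, hxV, hVS⟩ := mem_nhdsWithin.1 h1
    exact ⟨V, hVo, hxV, hVS⟩
  choose! V hVo hVx hVs using key
  have hW : IsOpen (⋃ x ∈ U, V x) := isOpen_biUnion fun x hx => hVo x hx
  have hUeq : U = S ∩ ⋃ x ∈ U, V x := by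
    apply subset_antisymm
    · intro x hx
      exact ⟨hx.1, mem_biUnion hx (hVx x hx)⟩
    · rintro z ⟨hzS, hz⟩
      obtain ⟨x, hxU, hzV⟩ := mem_iUnion₂.1 hz
      exact ⟨hzS, hVs x hxU ⟨hzV, hzS⟩⟩
  have : {z ∈ S | b z ≤ lam} = S \ U := by
    ext z
    simp only [mem_setOf_eq, mem_diff, hU]
    constructor
    · rintro ⟨h1, h2⟩; exact ⟨h1, fun h => absurd h2 (not_le.2 h.2)⟩
    · rintro ⟨h1, h2⟩
      refine ⟨h1, ?_⟩
      by_contra h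
      exact h2 ⟨h1, not_le.1 h⟩
  rw [this, hUeq]
  exact hSmeas.diff (hSmeas.inter hW.measurableSet)


/-- If `a = ∞` (friction `∞` off the network `S`) and the path costs `L(γ_j)` are uniformly
bounded, then for each `δ > 0` there is `λ < ∞` with `H^1(γ_j([0,1]) \ S_λ) ≤ δ` for all `j`. -/
theorem curves_intersect_network {n : ℕ} (S : Set (Euc n))
    (hSrect : Countably1Rectifiable S) (hSmeas : MeasurableSet S)
    (b : Euc n → ℝ≥0∞) (hlsc : LowerSemicontinuousOn b S) (hbout : ∀ z ∉ S, b z = ⊤)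
    (γ : ℕ → ℝ → Euc n) (K : ℕ → ℝ≥0) (hlip : ∀ j, LipschitzWith (K j) (γ j))
    (hcube : ∀ j, ∀ t ∈ Icc (0:ℝ) 1, γ j t ∈ cube n)
    (M : ℝ≥0∞) (hM : M ≠ ⊤) (hbound : ∀ j, pathCost b (γ j) ≤ M)
    (δ : ℝ≥0∞) (hδ : 0 < δ) :
    ∃ lam : ℝ≥0∞, lam ≠ ⊤ ∧
      ∀ j, μH[1] ((γ j '' Icc (0:ℝ) 1) \ {z ∈ S | b z ≤ lam}) ≤ δ := by
  set lam : ℝ≥0∞ := M / δ + 1 with hlamdef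
  have hlamtop : lam ≠ ⊤ := by
    rw [hlamdef]
    exact ENNReal.add_ne_top.2 ⟨(ENNReal.div_lt_top hM hδ.ne').ne, ENNReal.one_ne_top⟩
  have hlam0 : lam ≠ 0 := by
    rw [hlamdef]
    simp
  refine ⟨lam, hlamtop, fun j => ?_⟩
  set Sl : Set (Euc n) := {z ∈ S | b z ≤ lam} with hSl
  have hSlmeas : MeasurableSet Sl := measurableSet_sublevel hSmeas hlsc lam
  set E : Set ℝ := Icc (0:ℝ) 1 ∩ γ j ⁻¹' Slᶜ with hE
  have hEmeas : MeasurableSet E :=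
    measurableSet_Icc.inter ((hlip j).continuous.measurable hSlmeas.compl)
  have hEIcc : E ⊆ Icc (0:ℝ) 1 := inter_subset_left
  -- image inclusion
  have himg : (γ j '' Icc (0:ℝ) 1) \ Sl ⊆ γ j '' E := by
    rintro y ⟨⟨t, ht, rfl⟩, hy⟩
    exact ⟨t, ⟨ht, hy⟩, rfl⟩
  -- integral bound
  set I : ℝ≥0∞ := ∫⁻ t in E, ENNReal.ofReal ‖deriv (γ j) t‖ with hI
  have hlamb : ∀ t ∈ E, lam ≤ b (γ j t) := by
    intro t ht
    have h1 : γ j t ∉ Sl := ht.2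
    by_cases h2 : γ j t ∈ S
    · have : ¬ b (γ j t) ≤ lam := fun h => h1 ⟨h2, h⟩
      exact (not_le.1 this).le
    · rw [hbout _ h2]; exact le_top
  have hmain : lam * I ≤ M := by
    have h1 : lam * I = ∫⁻ t in E, lam * ENNReal.ofReal ‖deriv (γ j) t‖ :=
      (lintegral_const_mul' lam _ hlamtop).symm
    have h2 : (∫⁻ t in E, lam * ENNReal.ofReal ‖deriv (γ j) t‖)
        ≤ ∫⁻ t in E, b (γ j t) * ENNReal.ofReal ‖deriv (γ j) t‖ := by
      refine lintegral_mono_ae ?_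
      refine (ae_restrict_iff' hEmeas).2 (ae_of_all _ fun t ht => ?_)
      exact mul_le_mul_left (hlamb t ht) _
    have h3 : (∫⁻ t in E, b (γ j t) * ENNReal.ofReal ‖deriv (γ j) t‖)
        ≤ pathCost b (γ j) := lintegral_mono_set hEIcc
    calc lam * I = _ := h1
      _ ≤ _ := h2
      _ ≤ pathCost b (γ j) := h3
      _ ≤ M := hbound j
  have hIle : I ≤ M / lam := by
    rw [ENNReal.le_div_iff_mul_le (Or.inl hlam0) (Or.inl hlamtop)]
    rw [mul_comm]; exact hmain
  have hMlam : M / lam ≤ δ := by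
    refine ENNReal.div_le_of_le_mul ?_
    by_cases hδtop : δ = ⊤
    · rw [hδtop]
      exact le_trans le_top (le_of_eq (ENNReal.top_mul hlam0).symm)
    · have : δ * lam = M + δ := by
        rw [hlamdef, mul_add, mul_one, ENNReal.mul_div_cancel hδ.ne' hδtop]
      rw [this]; exact le_self_add
  calc μH[1] ((γ j '' Icc (0:ℝ) 1) \ Sl) ≤ μH[1] (γ j '' E) := measure_mono himg
    _ ≤ I := hmeas_image_le_lintegral (hlip j) hEmeas hEIcc
    _ ≤ M / lam := hIle
    _ ≤ δ := hMlam
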